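/- Mass conservation for the mass–energy conservative (MEC) scheme with discretized multiplicative noise: let Δt > 0, ε ∈ ℝ, let f̃_0, …, f̃_N be real numbers, let σ ≥ 1 be an integer, and let u⁰, u¹ ∈ ℂ^{N+1}. Assume there exist real numbers V_0, …, V_N such that V_j·(|u¹_j|² − |u⁰_j|²) = (1/(σ+1))·(|u¹_j|^{2(σ+1)} − |u⁰_j|^{2(σ+1)}) for every 0 ≤ j ≤ N, and that for every 0 ≤ j ≤ N one has i·(u¹_j − u⁰_j)/Δt + D₂u^{1/2}_j + V_j·u^{1/2}_j = ε·f̃_j·u^{1/2}_j, where u^{1/2}_j := (u⁰_j + u¹_j)/2 (extended by the Neumann conventions). Then M_dis[u¹] = M_dis[u⁰]. -/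

import Mathlib

open Finset

/-- Extended mesh size `Δx_j` for `j ∈ {-1, 0, …, N}`, with the conventions
`Δx_{-1} := Δx_0` and `Δx_N := Δx_{N-1}`. -/
noncomputable def meshDx (N : ℕ) (x : ℕ → ℝ) (j : ℤ) : ℝ :=
  if j ≤ 0 then x 1 - x 0
  else if (N : ℤ) ≤ j then x N - x (N - 1)
  else x (j.toNat + 1) - x j.toNat

/-- Neumann extension of a vector `u ∈ ℂ^{N+1}`: `u_{-1} := u_0`, `u_{N+1} := u_N`. -/
noncomputable def neumannExt (N : ℕ) (u : ℕ → ℂ) (j : ℤ) : ℂ :=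
  if j ≤ 0 then u 0
  else if (N : ℤ) ≤ j then u N
  else u j.toNat

/-- Discrete second-difference operator on the (possibly non-uniform) mesh. -/
noncomputable def D2 (N : ℕ) (x : ℕ → ℝ) (u : ℕ → ℂ) (j : ℕ) : ℂ :=
  2 * neumannExt N u ((j : ℤ) - 1) /
      ((meshDx N x ((j : ℤ) - 1) : ℂ) * ((meshDx N x ((j : ℤ) - 1) : ℂ) + (meshDx N x (j : ℤ) : ℂ)))
    - 2 * neumannExt N u (j : ℤ) / ((meshDx N x ((j : ℤ) - 1) : ℂ) * (meshDx N x (j : ℤ) : ℂ))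
    + 2 * neumannExt N u ((j : ℤ) + 1) /
      (((meshDx N x ((j : ℤ) - 1) : ℂ) + (meshDx N x (j : ℤ) : ℂ)) * (meshDx N x (j : ℤ) : ℂ))

/-- Discrete mass `M_dis[u] = (1/2)·Σ_{j=0}^{N} |u_j|²·(Δx_j + Δx_{j-1})`. -/
noncomputable def Mdis (N : ℕ) (x : ℕ → ℝ) (u : ℕ → ℂ) : ℝ :=
  (1 / 2) * ∑ j ∈ Finset.range (N + 1),
    ‖u j‖ ^ 2 * (meshDx N x (j : ℤ) + meshDx N x ((j : ℤ) - 1))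

lemma meshDx_natCast (N : ℕ) (x : ℕ → ℝ) (j : ℕ) (h : j < N) :
    meshDx N x (j : ℤ) = x (j + 1) - x j := by
  unfold meshDx
  rcases Nat.eq_zero_or_pos j with h0 | h0
  · subst h0; simp
  · rw [if_neg (by exact_mod_cast Nat.not_le.mpr h0), if_neg (by exact_mod_cast Nat.not_le.mpr h)]
    simp

lemma meshDx_neg_one (N : ℕ) (x : ℕ → ℝ) : meshDx N x (-1) = x 1 - x 0 := by
  simp [meshDx]

lemma meshDx_top (N : ℕ) (x : ℕ → ℝ) (hN : 1 ≤ N) :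
    meshDx N x (N : ℤ) = x N - x (N - 1) := by
  unfold meshDx
  rw [if_neg (by exact_mod_cast Nat.not_le.mpr hN), if_pos le_rfl]

lemma neumannExt_natCast (N : ℕ) (u : ℕ → ℂ) (j : ℕ) (h : j ≤ N) :
    neumannExt N u (j : ℤ) = u j := by
  unfold neumannExt
  rcases Nat.eq_zero_or_pos j with h0 | h0
  · subst h0; simp
  · rw [if_neg (by exact_mod_cast Nat.not_le.mpr h0)]
    rcases eq_or_lt_of_le h with h1 | h1
    · subst h1; rw [if_pos le_rfl]
    · rw [if_neg (by exact_mod_cast Nat.not_le.mpr h1)]; simp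

lemma neumannExt_neg_one (N : ℕ) (u : ℕ → ℂ) : neumannExt N u (-1) = u 0 := by
  simp [neumannExt]

lemma neumannExt_top (N : ℕ) (u : ℕ → ℂ) : neumannExt N u ((N : ℤ) + 1) = u N := by
  unfold neumannExt
  rw [if_neg (by omega), if_pos (by omega)]

lemma alg_helper (a b c wl wm wr : ℂ) (ha : a ≠ 0) (hb : b ≠ 0) (hc : c ≠ 0)
    (h : c = a + b) :
    ((b + a) / 2) * (2 * wl / (a * c) - 2 * wm / (a * b) + 2 * wr / (c * b))
      = (wr - wm) / b - (wm - wl) / a := by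
  have h1 : a * c ≠ 0 := mul_ne_zero ha hc
  have h2 : a * b ≠ 0 := mul_ne_zero ha hb
  have h3 : c * b ≠ 0 := mul_ne_zero hc hb
  rw [div_sub_div _ _ h1 h2, div_add_div _ _ (mul_ne_zero h1 h2) h3,
    div_mul_div_comm, div_sub_div _ _ hb ha,
    div_eq_div_iff (by norm_num [ha, hb, hc] : (2 : ℂ) * (a * c * (a * b) * (c * b)) ≠ 0)
      (mul_ne_zero hb ha)]
  subst h
  ring

lemma ofReal_add_ne_zero {p q : ℝ} (hp : 0 < p) (hq : 0 < q) :
    ((p : ℂ) + (q : ℂ)) ≠ 0 := by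
  intro h
  rw [← Complex.ofReal_add, Complex.ofReal_eq_zero] at h
  linarith

/-- Key pointwise identity: `ρ_j · (D₂u)_j` telescopes. -/
lemma rho_D2 (N : ℕ) (hN : 1 ≤ N) (x : ℕ → ℝ) (hx : ∀ j, j < N → x j < x (j + 1))
    (u : ℕ → ℂ) (j : ℕ) (hj : j ≤ N) :
    (((meshDx N x (j : ℤ) + meshDx N x ((j : ℤ) - 1)) / 2 : ℝ) : ℂ) * D2 N x u j
      = (if j < N then (u (j + 1) - u j) / ((x (j + 1) - x j : ℝ) : ℂ) else 0)
        - (if j = 0 then 0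
            else (u (j - 1 + 1) - u (j - 1)) / ((x (j - 1 + 1) - x (j - 1) : ℝ) : ℂ)) := by
  have hd : ∀ k, k < N → ((x (k + 1) - x k : ℝ) : ℂ) ≠ 0 := fun k hk => by
    exact_mod_cast sub_ne_zero.mpr (ne_of_gt (hx k hk))
  have hdp : ∀ k, k < N → (0 : ℝ) < x (k + 1) - x k := fun k hk => sub_pos.mpr (hx k hk)
  rcases Nat.eq_zero_or_pos j with h0 | h0
  · subst h0
    have e1 : ((0 : ℕ) : ℤ) - 1 = -1 := by norm_num
    have e2 : ((0 : ℕ) : ℤ) + 1 = ((1 : ℕ) : ℤ) := by norm_num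
    rw [if_pos (by omega), if_pos rfl]
    unfold D2
    rw [e1, e2, meshDx_neg_one, neumannExt_neg_one, meshDx_natCast N x 0 (by omega),
      neumannExt_natCast N u 0 (by omega), neumannExt_natCast N u 1 (by omega)]
    rw [Complex.ofReal_div, Complex.ofReal_add, Complex.ofReal_ofNat,
      alg_helper _ _ _ _ _ _ (hd 0 hN) (hd 0 hN)
        (ofReal_add_ne_zero (hdp 0 hN) (hdp 0 hN)) rfl]
    simp
  rcases eq_or_lt_of_le hj with hNj | hNj
  · subst hNj
    have e1 : ((j : ℕ) : ℤ) - 1 = ((j - 1 : ℕ) : ℤ) := by omega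
    have e3 : j - 1 + 1 = j := by omega
    rw [if_neg (lt_irrefl j), if_neg (by omega)]
    unfold D2
    rw [e1, meshDx_top j x hN, meshDx_natCast j x (j - 1) (by omega),
      neumannExt_natCast j u (j - 1) (by omega), neumannExt_natCast j u j le_rfl,
      neumannExt_top j u, e3]
    have h2 : ((x j - x (j - 1) : ℝ) : ℂ) ≠ 0 := by
      have := hd (j - 1) (by omega); rwa [e3] at this
    have h2p : (0 : ℝ) < x j - x (j - 1) := by
      have := hdp (j - 1) (by omega); rwa [e3] at this
    rw [Complex.ofReal_div, Complex.ofReal_add, Complex.ofReal_ofNat,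
      alg_helper _ _ _ _ _ _ h2 h2 (ofReal_add_ne_zero h2p h2p) rfl]
    simp
  · have e1 : ((j : ℕ) : ℤ) - 1 = ((j - 1 : ℕ) : ℤ) := by omega
    have e2 : ((j : ℕ) : ℤ) + 1 = ((j + 1 : ℕ) : ℤ) := by omega
    have e3 : j - 1 + 1 = j := by omega
    rw [if_pos hNj, if_neg (by omega)]
    unfold D2
    rw [e1, e2, meshDx_natCast N x j hNj, meshDx_natCast N x (j - 1) (by omega),
      neumannExt_natCast N u (j - 1) (by omega), neumannExt_natCast N u j (le_of_lt hNj),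
      neumannExt_natCast N u (j + 1) hNj]
    rw [e3]
    have h1 := hd j hNj
    have h2 : ((x j - x (j - 1) : ℝ) : ℂ) ≠ 0 := by
      have := hd (j - 1) (by omega); rwa [e3] at this
    have h2p : (0 : ℝ) < x j - x (j - 1) := by
      have := hdp (j - 1) (by omega); rwa [e3] at this
    rw [Complex.ofReal_div, Complex.ofReal_add, Complex.ofReal_ofNat,
      alg_helper _ _ _ _ _ _ h2 h1 (ofReal_add_ne_zero h2p (hdp j hNj)) rfl]

lemma norm_sq_complex (z : ℂ) : ‖z‖ ^ 2 = z.re * z.re + z.im * z.im := by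
  rw [Complex.sq_norm, Complex.normSq_apply]

/-- Mass conservation for the mass–energy conservative (MEC) scheme with discretized
multiplicative noise. -/
theorem mec_scheme_mass_conservation
    (N : ℕ) (hN : 1 ≤ N) (x : ℕ → ℝ) (hx : ∀ j, j < N → x j < x (j + 1))
    (Δt : ℝ) (hΔt : 0 < Δt) (ε : ℝ) (ftilde : ℕ → ℝ)
    (σ : ℕ) (hσ : 1 ≤ σ) (u0 u1 : ℕ → ℂ) (V : ℕ → ℝ)
    (hV : ∀ j ≤ N, V j * (‖u1 j‖ ^ 2 - ‖u0 j‖ ^ 2)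
      = (1 / ((σ : ℝ) + 1)) * (‖u1 j‖ ^ (2 * (σ + 1)) - ‖u0 j‖ ^ (2 * (σ + 1))))
    (hscheme : ∀ j ≤ N,
      Complex.I * (u1 j - u0 j) / (Δt : ℂ)
        + D2 N x (fun k => (u0 k + u1 k) / 2) j
        + (V j : ℂ) * ((u0 j + u1 j) / 2)
      = (ε : ℂ) * (ftilde j : ℂ) * ((u0 j + u1 j) / 2)) :
    Mdis N x u1 = Mdis N x u0 := by
  set w : ℕ → ℂ := fun k => (u0 k + u1 k) / 2 with hw
  set ρ : ℕ → ℝ := fun j => (meshDx N x (j : ℤ) + meshDx N x ((j : ℤ) - 1)) / 2 with hρ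
  set Dd : ℕ → ℂ := fun j =>
    if j < N then (w (j + 1) - w j) / ((x (j + 1) - x j : ℝ) : ℂ) else 0 with hDd
  -- the weighted sum of conj(w_j)·D2 w_j
  set A : ℂ := ∑ j ∈ Finset.range (N + 1),
    ((ρ j : ℝ) : ℂ) * ((starRingEnd ℂ) (w j) * D2 N x w j) with hA
  -- Step 1: A telescopes to a real quantity
  have step1 : A = ∑ j ∈ Finset.range N,
      ((starRingEnd ℂ) (w j) - (starRingEnd ℂ) (w (j + 1))) * Dd j := by
    have hterm : ∀ j ∈ Finset.range (N + 1),
        ((ρ j : ℝ) : ℂ) * ((starRingEnd ℂ) (w j) * D2 N x w j)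
          = (starRingEnd ℂ) (w j) * Dd j
            - (starRingEnd ℂ) (w j) * (if j = 0 then 0
                else (w (j - 1 + 1) - w (j - 1)) / ((x (j - 1 + 1) - x (j - 1) : ℝ) : ℂ)) := by
      intro j hj
      rw [Finset.mem_range] at hj
      have := rho_D2 N hN x hx w j (by omega)
      calc ((ρ j : ℝ) : ℂ) * ((starRingEnd ℂ) (w j) * D2 N x w j)
          = (starRingEnd ℂ) (w j) * (((ρ j : ℝ) : ℂ) * D2 N x w j) := by ring
        _ = _ := by rw [this, hDd]; ring
    rw [hA, Finset.sum_congr rfl hterm, Finset.sum_sub_distrib]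
    have l1 : ∑ j ∈ Finset.range (N + 1), (starRingEnd ℂ) (w j) * Dd j
        = ∑ j ∈ Finset.range N, (starRingEnd ℂ) (w j) * Dd j := by
      rw [Finset.sum_range_succ, hDd]
      simp
    have l2 : ∑ j ∈ Finset.range (N + 1),
        (starRingEnd ℂ) (w j) * (if j = 0 then 0
          else (w (j - 1 + 1) - w (j - 1)) / ((x (j - 1 + 1) - x (j - 1) : ℝ) : ℂ))
        = ∑ j ∈ Finset.range N, (starRingEnd ℂ) (w (j + 1)) * Dd j := by
      rw [Finset.sum_range_succ']
      simp only [Nat.add_sub_cancel]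
      rw [if_pos trivial, mul_zero, add_zero]
      refine Finset.sum_congr rfl fun j hj => ?_
      rw [Finset.mem_range] at hj
      rw [if_neg (Nat.succ_ne_zero j), hDd]
      simp only [if_pos hj]
    rw [l1, l2, ← Finset.sum_sub_distrib]
    refine Finset.sum_congr rfl fun j hj => by ring
  -- Step 2: the telescoped sum is real
  have step2 : A.im = 0 := by
    rw [step1, Complex.im_sum]
    refine Finset.sum_eq_zero fun j hj => ?_
    rw [Finset.mem_range] at hj
    rw [hDd]
    simp only [if_pos hj]
    have : ((starRingEnd ℂ) (w j) - (starRingEnd ℂ) (w (j + 1)))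
        * ((w (j + 1) - w j) / ((x (j + 1) - x j : ℝ) : ℂ))
        = ((-(Complex.normSq (w (j + 1) - w j)) / (x (j + 1) - x j) : ℝ) : ℂ) := by
      have hc : (starRingEnd ℂ) (w j) - (starRingEnd ℂ) (w (j + 1))
          = -((starRingEnd ℂ) (w (j + 1) - w j)) := by rw [map_sub]; ring
      rw [hc, Complex.ofReal_div, Complex.ofReal_neg, ← Complex.mul_conj (w (j + 1) - w j)]
      ring
    rw [this, Complex.ofReal_im]
  -- Step 3: pointwise imaginary part from the scheme
  have step3 : ∀ j ≤ N, ((starRingEnd ℂ) (w j) * D2 N x w j).im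
      = -((‖u1 j‖ ^ 2 - ‖u0 j‖ ^ 2) / (2 * Δt)) := by
    intro j hj
    have hD : D2 N x w j = (ε : ℂ) * (ftilde j : ℂ) * w j - (V j : ℂ) * w j
        - Complex.I * (u1 j - u0 j) / (Δt : ℂ) := by
      have h := hscheme j hj
      linear_combination h
    rw [hD, hw]
    simp only [norm_sq_complex]
    simp only [Complex.mul_im, Complex.mul_re, Complex.sub_im, Complex.sub_re,
      Complex.add_im, Complex.add_re, Complex.div_im, Complex.div_re,
      Complex.I_re, Complex.I_im, Complex.ofReal_re, Complex.ofReal_im,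
      Complex.conj_re, Complex.conj_im, Complex.normSq_apply,
      Complex.re_ofNat, Complex.im_ofNat]
    field_simp
    ring
  -- Step 4: combine
  have step4 : ∑ j ∈ Finset.range (N + 1), ρ j * (‖u1 j‖ ^ 2 - ‖u0 j‖ ^ 2) = 0 := by
    have h1 : A.im = ∑ j ∈ Finset.range (N + 1),
        ρ j * (-((‖u1 j‖ ^ 2 - ‖u0 j‖ ^ 2) / (2 * Δt))) := by
      rw [hA, Complex.im_sum]
      refine Finset.sum_congr rfl fun j hj => ?_
      rw [Finset.mem_range] at hj
      rw [Complex.mul_im, Complex.ofReal_re, Complex.ofReal_im, step3 j (by omega)]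
      ring
    rw [step2] at h1
    have h2 : ∑ j ∈ Finset.range (N + 1), ρ j * (-((‖u1 j‖ ^ 2 - ‖u0 j‖ ^ 2) / (2 * Δt)))
        = (-(1 / (2 * Δt))) * ∑ j ∈ Finset.range (N + 1), ρ j * (‖u1 j‖ ^ 2 - ‖u0 j‖ ^ 2) := by
      rw [Finset.mul_sum]
      refine Finset.sum_congr rfl fun j hj => by ring
    rw [h2] at h1
    have h3 : (-(1 / (2 * Δt)) : ℝ) ≠ 0 := by
      have : (0 : ℝ) < 2 * Δt := by linarith
      simp [ne_of_gt this, hΔt.ne']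
    exact (mul_eq_zero.mp h1.symm).resolve_left h3
  -- conclude
  have final : Mdis N x u1 - Mdis N x u0
      = ∑ j ∈ Finset.range (N + 1), ρ j * (‖u1 j‖ ^ 2 - ‖u0 j‖ ^ 2) := by
    unfold Mdis
    rw [← mul_sub, ← Finset.sum_sub_distrib, Finset.mul_sum]
    refine Finset.sum_congr rfl fun j hj => ?_
    rw [hρ]
    ring
  rw [step4] at final
  linarith [final]
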